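/- Let u_n be a Lucas sequence with u_1 = 1, u_2 = A, u_{n+1} = A·u_n − B·u_{n−1}, A,B coprime nonzero integers. If ℓ is an odd prime with ℓ ∤ B and ℓ | (A^2 − 4B), and m_ℓ > 2 (i.e., ℓ ∤ A), then the least index n ≥ 2 with ℓ | u_n is n = ℓ. -/
import Mathlib


/-- Bilu–Hanrot–Voutier, Corollary 2.2(1) for Lucas sequences: if `ℓ` is an
odd prime with `ℓ ∤ B`, `ℓ ∤ A` and `ℓ ∣ A² - 4B`, then the least index
`n ≥ 2` with `ℓ ∣ u n` is `n = ℓ`. -/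
theorem rank_of_apparition_eq_ell (A B : ℤ) (hA : A ≠ 0) (hB : B ≠ 0)
    (hAB : IsCoprime A B) (u : ℕ → ℤ)
    (h1 : u 1 = 1) (h2 : u 2 = A)
    (hrec : ∀ n, 2 ≤ n → u (n + 1) = A * u n - B * u (n - 1))
    (ℓ : ℕ) (hℓ : ℓ.Prime) (hodd : Odd ℓ)
    (hℓB : ¬ (ℓ : ℤ) ∣ B) (hℓA : ¬ (ℓ : ℤ) ∣ A)
    (hdisc : (ℓ : ℤ) ∣ (A ^ 2 - 4 * B)) :
    (ℓ : ℤ) ∣ u ℓ ∧ ∀ n : ℕ, 2 ≤ n → n < ℓ → ¬ (ℓ : ℤ) ∣ u n := by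
  haveI : Fact ℓ.Prime := ⟨hℓ⟩
  set a : ZMod ℓ := (A : ZMod ℓ) with ha
  set b : ZMod ℓ := (B : ZMod ℓ) with hb
  have hab : a ^ 2 = 4 * b := by
    have := (ZMod.intCast_zmod_eq_zero_iff_dvd _ ℓ).2 hdisc
    push_cast at this
    linear_combination this
  have haz : a ≠ 0 := fun h => hℓA ((ZMod.intCast_zmod_eq_zero_iff_dvd _ ℓ).1 h)
  have h2z : (2 : ZMod ℓ) ≠ 0 := by
    intro h
    have hd : ℓ ∣ 2 := by
      have : ((2 : ℕ) : ZMod ℓ) = 0 := by exact_mod_cast h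
      exact (ZMod.natCast_eq_zero_iff 2 ℓ).1 this
    have := (Nat.prime_dvd_prime_iff_eq hℓ Nat.prime_two).1 hd
    rcases hodd with ⟨k, hk⟩; omega
  have key : ∀ n : ℕ, (2 : ZMod ℓ) ^ n * (u (n + 1) : ZMod ℓ) = (n + 1) * a ^ n ∧
      (2 : ZMod ℓ) ^ (n + 1) * (u (n + 2) : ZMod ℓ) = (n + 2) * a ^ (n + 1) := by
    intro n
    induction n with
    | zero => constructor <;> simp [h1, h2, ha] <;> ring
    | succ n ih =>
      refine ⟨by exact_mod_cast ih.2, ?_⟩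
      have hr := hrec (n + 2) (by omega)
      have hr' : u (n + 3) = A * u (n + 2) - B * u (n + 1) := by
        simpa using hr
      have : ((u (n + 3) : ℤ) : ZMod ℓ) = a * (u (n + 2) : ZMod ℓ) - b * (u (n + 1) : ZMod ℓ) := by
        rw [hr']; push_cast; ring
      rw [show n + 1 + 2 = n + 3 from rfl, this]
      push_cast
      have e1 := ih.1
      have e2 := ih.2
      push_cast at e1 e2
      linear_combination (2 : ZMod ℓ) * a * e2 - 4 * b * e1 + ((n : ZMod ℓ) + 1) * a ^ n * hab
  have main : ∀ n : ℕ, 1 ≤ n → (2 : ZMod ℓ) ^ (n - 1) * (u n : ZMod ℓ) = n * a ^ (n - 1) := by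
    intro n hn
    obtain ⟨m, rfl⟩ := Nat.exists_eq_add_of_le hn
    have := (key m).1
    simpa [Nat.add_comm, Nat.add_sub_cancel] using this
  have crit : ∀ n : ℕ, 1 ≤ n → ((ℓ : ℤ) ∣ u n ↔ ℓ ∣ n) := by
    intro n hn
    rw [← ZMod.intCast_zmod_eq_zero_iff_dvd, ← ZMod.natCast_eq_zero_iff]
    constructor
    · intro h
      have hm := main n hn
      rw [h, mul_zero] at hm
      have : (n : ZMod ℓ) * a ^ (n - 1) = 0 := hm.symm
      rcases mul_eq_zero.1 this with h' | h'
      · exact h'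
      · exact absurd h' (pow_ne_zero _ haz)
    · intro hn0
      have hm := main n hn
      rw [hn0, zero_mul] at hm
      rcases mul_eq_zero.1 hm with h' | h'
      · exact absurd h' (pow_ne_zero _ h2z)
      · exact h'
  constructor
  · exact (crit ℓ hℓ.one_lt.le).2 dvd_rfl
  · intro n h2n hnℓ hdvd
    have := (crit n (by omega)).1 hdvd
    have := Nat.le_of_dvd (by omega) this
    omega
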